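/- arXiv:1708.00681 — 4 statements merged into one kernel-verified Lean document; each statement's English description precedes it below -/
import Mathlib

section
/- For a convex polygon P, any maximum-area convex polygon with k vertices inscribed in P (vertices on the boundary of P) can be chosen so that all its vertices are vertices of P. -/
open MeasureTheory Set

/-- Cross product of two planar vectors. -/
noncomputable def cross (u v : ℝ × ℝ) : ℝ := u.1 * v.2 - u.2 * v.1

/-- Signed area of triangle `p q r`. -/
noncomputable def sArea (p q r : ℝ × ℝ) : ℝ :=
  ((q.1 - p.1) * (r.2 - p.2) - (q.2 - p.2) * (r.1 - p.1)) / 2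

/-- (Unsigned) area of triangle `p q r`. -/
noncomputable def triArea (p q r : ℝ × ℝ) : ℝ :=
  |(q.1 - p.1) * (r.2 - p.2) - (q.2 - p.2) * (r.1 - p.1)| / 2

/-- Shoelace area of a quadrilateral `p q r s` given in cyclic order. -/
noncomputable def quadArea (p q r s : ℝ × ℝ) : ℝ :=
  |p.1 * (q.2 - s.2) + q.1 * (r.2 - p.2) + r.1 * (s.2 - q.2) + s.1 * (p.2 - r.2)| / 2

/-- Area of the convex hull of a finite planar point set. -/
noncomputable def hullArea (S : Finset (ℝ × ℝ)) : ENNReal :=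
  volume (convexHull ℝ (S : Set (ℝ × ℝ)))


-- slices of convex sets are convex
lemma slice_convex {A : Set (ℝ × ℝ)} (hA : Convex ℝ A) (x : ℝ) :
    Convex ℝ (Prod.mk x ⁻¹' A) := by
  intro y1 hy1 y2 hy2 α β hα hβ hαβ
  have h := hA hy1 hy2 hα hβ hαβ
  have : α • ((x, y1) : ℝ × ℝ) + β • (x, y2) = (x, α • y1 + β • y2) := by
    ext <;> simp <;> linear_combination x*hαβ
  rwa [this] at h

lemma Ioo_subset_of_convex {s : Set ℝ} (hs : Convex ℝ s) (hne : s.Nonempty)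
    (hba : BddAbove s) (hbb : BddBelow s) : Ioo (sInf s) (sSup s) ⊆ s := by
  intro y hy
  obtain ⟨a, ha, hay⟩ := (csInf_lt_iff hbb hne).mp hy.1
  obtain ⟨b, hb, hyb⟩ := (lt_csSup_iff hba hne).mp hy.2
  exact hs.ordConnected.out ha hb ⟨hay.le, hyb.le⟩

lemma slice_bdd {A : Set (ℝ × ℝ)} (hAb : Bornology.IsBounded A) (x : ℝ) :
    BddAbove (Prod.mk x ⁻¹' A) ∧ BddBelow (Prod.mk x ⁻¹' A) := by
  obtain ⟨r, hr⟩ := hAb.subset_closedBall 0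
  have hsub : Prod.mk x ⁻¹' A ⊆ Icc (-r) r := by
    intro y hy
    have h1 : ‖((x, y) : ℝ × ℝ)‖ ≤ r := by
      have := hr hy; simpa [Metric.mem_closedBall, dist_zero_right] using this
    have h2 : |y| ≤ r := le_trans (norm_snd_le ((x, y) : ℝ × ℝ)) h1
    exact abs_le.mp h2
  exact ⟨(bddAbove_Icc).mono hsub, (bddBelow_Icc).mono hsub⟩

/-- Core slicing lemma. -/
lemma core_slicing (X A B : Set (ℝ × ℝ)) (t : ℝ) (ht0 : 0 ≤ t) (ht1 : t ≤ 1)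
    (hX : MeasurableSet X)
    (hAc : Convex ℝ A) (hAm : MeasurableSet A) (hAb : Bornology.IsBounded A)
    (hBc : Convex ℝ B) (hBm : MeasurableSet B) (hBb : Bornology.IsBounded B)
    (hcond : ∀ z ∈ X, ∃ p ∈ A, ∃ q ∈ B,
      p.1 = z.1 ∧ q.1 = z.1 ∧ z.2 = t * p.2 + (1 - t) * q.2) :
    volume X ≤ ENNReal.ofReal t * volume A + ENNReal.ofReal (1 - t) * volume B := by
  have key : ∀ x : ℝ, volume (Prod.mk x ⁻¹' X) ≤
      ENNReal.ofReal t * volume (Prod.mk x ⁻¹' A)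
        + ENNReal.ofReal (1 - t) * volume (Prod.mk x ⁻¹' B) := by
    intro x
    rcases eq_empty_or_nonempty (Prod.mk x ⁻¹' X) with he | ⟨y0, hy0⟩
    · simp [he]
    · -- slices of A and B at x are nonempty
      obtain ⟨p0, hp0, q0, hq0, hp01, hq01, -⟩ := hcond (x, y0) hy0
      have hAne : (Prod.mk x ⁻¹' A).Nonempty := by
        refine ⟨p0.2, ?_⟩
        show (x, p0.2) ∈ A
        have h : ((x, p0.2) : ℝ × ℝ) = p0 := Prod.ext hp01.symm rfl
        rwa [h]
      have hBne : (Prod.mk x ⁻¹' B).Nonempty := by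
        refine ⟨q0.2, ?_⟩
        show (x, q0.2) ∈ B
        have h : ((x, q0.2) : ℝ × ℝ) = q0 := Prod.ext hq01.symm rfl
        rwa [h]
      obtain ⟨hAba, hAbb⟩ := slice_bdd hAb x
      obtain ⟨hBba, hBbb⟩ := slice_bdd hBb x
      set iA := sInf (Prod.mk x ⁻¹' A); set IA := sSup (Prod.mk x ⁻¹' A)
      set iB := sInf (Prod.mk x ⁻¹' B); set IB := sSup (Prod.mk x ⁻¹' B)
      have hiA : iA ≤ IA := csInf_le_csSup hAne hAbb hAba
      have hiB : iB ≤ IB := csInf_le_csSup hBne hBbb hBba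
      have hsub : Prod.mk x ⁻¹' X ⊆ Icc (t * iA + (1 - t) * iB) (t * IA + (1 - t) * IB) := by
        intro y hy
        obtain ⟨p, hp, q, hq, hp1, hq1, hy2⟩ := hcond (x, y) hy
        have hpA : p.2 ∈ Prod.mk x ⁻¹' A := by
          show (x, p.2) ∈ A
          have h : ((x, p.2) : ℝ × ℝ) = p := Prod.ext hp1.symm rfl
          rwa [h]
        have hqB : q.2 ∈ Prod.mk x ⁻¹' B := by
          show (x, q.2) ∈ B
          have h : ((x, q.2) : ℝ × ℝ) = q := Prod.ext hq1.symm rfl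
          rwa [h]
        have h1 : iA ≤ p.2 := csInf_le hAbb hpA
        have h2 : p.2 ≤ IA := le_csSup hAba hpA
        have h3 : iB ≤ q.2 := csInf_le hBbb hqB
        have h4 : q.2 ≤ IB := le_csSup hBba hqB
        simp only at hy2
        constructor
        · rw [hy2] at *; nlinarith
        · rw [hy2] at *; nlinarith
      have step1 : volume (Prod.mk x ⁻¹' X)
          ≤ ENNReal.ofReal (t * (IA - iA) + (1 - t) * (IB - iB)) := by
        calc volume (Prod.mk x ⁻¹' X) ≤ volume (Icc (t * iA + (1 - t) * iB) (t * IA + (1 - t) * IB)) :=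
              measure_mono hsub
          _ = ENNReal.ofReal (t * IA + (1 - t) * IB - (t * iA + (1 - t) * iB)) := Real.volume_Icc
          _ = ENNReal.ofReal (t * (IA - iA) + (1 - t) * (IB - iB)) := by ring_nf
      have hA' : ENNReal.ofReal (IA - iA) ≤ volume (Prod.mk x ⁻¹' A) := by
        calc ENNReal.ofReal (IA - iA) = volume (Ioo iA IA) := (Real.volume_Ioo).symm
          _ ≤ volume (Prod.mk x ⁻¹' A) :=
            measure_mono (Ioo_subset_of_convex (slice_convex hAc x) hAne hAba hAbb)
      have hB' : ENNReal.ofReal (IB - iB) ≤ volume (Prod.mk x ⁻¹' B) := by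
        calc ENNReal.ofReal (IB - iB) = volume (Ioo iB IB) := (Real.volume_Ioo).symm
          _ ≤ volume (Prod.mk x ⁻¹' B) :=
            measure_mono (Ioo_subset_of_convex (slice_convex hBc x) hBne hBba hBbb)
      calc volume (Prod.mk x ⁻¹' X) ≤ ENNReal.ofReal (t * (IA - iA) + (1 - t) * (IB - iB)) := step1
        _ = ENNReal.ofReal t * ENNReal.ofReal (IA - iA)
            + ENNReal.ofReal (1 - t) * ENNReal.ofReal (IB - iB) := by
            rw [ENNReal.ofReal_add (by nlinarith) (by nlinarith),
              ENNReal.ofReal_mul ht0, ENNReal.ofReal_mul (by linarith)]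
        _ ≤ _ := add_le_add (mul_le_mul_right hA' _) (mul_le_mul_right hB' _)
  calc volume X = ∫⁻ x, volume (Prod.mk x ⁻¹' X) := by
        rw [MeasureTheory.Measure.volume_eq_prod, Measure.prod_apply hX]
    _ ≤ ∫⁻ x, (ENNReal.ofReal t * volume (Prod.mk x ⁻¹' A)
          + ENNReal.ofReal (1 - t) * volume (Prod.mk x ⁻¹' B)) := lintegral_mono key
    _ = ENNReal.ofReal t * (∫⁻ x, volume (Prod.mk x ⁻¹' A))
          + ENNReal.ofReal (1 - t) * (∫⁻ x, volume (Prod.mk x ⁻¹' B)) := by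
        rw [lintegral_add_left ((measurable_measure_prodMk_left hAm).const_mul _),
          lintegral_const_mul _ (measurable_measure_prodMk_left hAm),
          lintegral_const_mul _ (measurable_measure_prodMk_left hBm)]
    _ = ENNReal.ofReal t * volume A + ENNReal.ofReal (1 - t) * volume B := by
        rw [← Measure.prod_apply hAm, ← Measure.prod_apply hBm,
          ← MeasureTheory.Measure.volume_eq_prod]

/-- Linear map sending `u ≠ 0` to `(0, 1)`, used to align slicing direction. -/
noncomputable def planeMap (u : ℝ × ℝ) : (ℝ × ℝ) →ₗ[ℝ] (ℝ × ℝ) where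
  toFun p := (u.2 * p.1 - u.1 * p.2, (u.1 * p.1 + u.2 * p.2) / (u.1 ^ 2 + u.2 ^ 2))
  map_add' p q := by ext <;> simp <;> ring
  map_smul' c p := by ext <;> simp <;> ring

noncomputable def planeInv (u : ℝ × ℝ) : (ℝ × ℝ) →ₗ[ℝ] (ℝ × ℝ) where
  toFun p := (u.2 * p.1 / (u.1 ^ 2 + u.2 ^ 2) + u.1 * p.2, -(u.1 * p.1) / (u.1 ^ 2 + u.2 ^ 2) + u.2 * p.2)
  map_add' p q := by ext <;> simp <;> ring
  map_smul' c p := by ext <;> simp <;> ring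

lemma sq_sum_pos {u : ℝ × ℝ} (hu : u ≠ 0) : 0 < u.1 ^ 2 + u.2 ^ 2 := by
  rcases eq_or_ne u.1 0 with h1 | h1
  · have h2 : u.2 ≠ 0 := fun h2 => hu (Prod.ext h1 h2)
    have := pow_two_pos_of_ne_zero h2
    nlinarith [sq_nonneg u.1]
  · have := pow_two_pos_of_ne_zero h1
    nlinarith [sq_nonneg u.2]

noncomputable def planeEquiv (u : ℝ × ℝ) (hu : u ≠ 0) : (ℝ × ℝ) ≃ₗ[ℝ] (ℝ × ℝ) :=
  LinearEquiv.ofLinear (planeMap u) (planeInv u)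
    (by
      have hq := (sq_sum_pos hu).ne'
      apply LinearMap.ext; intro p
      ext <;> simp [planeMap, planeInv] <;> field_simp <;> ring)
    (by
      have hq := (sq_sum_pos hu).ne'
      apply LinearMap.ext; intro p
      ext <;> simp [planeMap, planeInv] <;> field_simp <;> ring)

lemma planeMap_det_ne (u : ℝ × ℝ) (hu : u ≠ 0) : LinearMap.det (planeMap u) ≠ 0 := by
  have h : IsUnit (LinearMap.det ((planeEquiv u hu : (ℝ × ℝ) ≃ₗ[ℝ] (ℝ × ℝ)) : (ℝ × ℝ) →ₗ[ℝ] (ℝ × ℝ))) :=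
    LinearEquiv.isUnit_det' _
  have he : ((planeEquiv u hu : (ℝ × ℝ) ≃ₗ[ℝ] (ℝ × ℝ)) : (ℝ × ℝ) →ₗ[ℝ] (ℝ × ℝ)) = planeMap u := rfl
  rw [he] at h
  exact h.ne_zero

lemma volume_singleton_plane (x : ℝ × ℝ) : volume ({x} : Set (ℝ × ℝ)) = 0 := by
  have h : ({x} : Set (ℝ × ℝ)) = {x.1} ×ˢ {x.2} := by ext p; simp [Prod.ext_iff]
  rw [h, MeasureTheory.Measure.volume_eq_prod, Measure.prod_prod, Real.volume_singleton, zero_mul]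

lemma seg_ineq (E : Finset (ℝ × ℝ)) (a b : ℝ × ℝ) (t : ℝ) (ht0 : 0 ≤ t) (ht1 : t ≤ 1) :
    volume (convexHull ℝ (insert (t • a + (1 - t) • b) (E : Set (ℝ × ℝ)))) ≤
      ENNReal.ofReal t * volume (convexHull ℝ (insert a (E : Set (ℝ × ℝ)))) +
        ENNReal.ofReal (1 - t) * volume (convexHull ℝ (insert b (E : Set (ℝ × ℝ)))) := by
  have hsum : ENNReal.ofReal t + ENNReal.ofReal (1 - t) = 1 := by
    rw [← ENNReal.ofReal_add ht0 (by linarith)]; norm_num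
  rcases eq_or_ne a b with rfl | hab
  · have hx : t • a + (1 - t) • a = a := by module
    rw [hx, ← add_mul, hsum, one_mul]
  rcases E.eq_empty_or_nonempty with rfl | hEne
  · simp only [Finset.coe_empty, LawfulSingleton.insert_empty_eq, convexHull_singleton]
    rw [volume_singleton_plane]
    exact zero_le
  have hEne' : (E : Set (ℝ × ℝ)).Nonempty := by exact_mod_cast hEne
  set u : ℝ × ℝ := b - a with hu_def
  have hu : u ≠ 0 := sub_ne_zero.mpr (Ne.symm hab)
  set L := planeMap u with hL_def
  set x : ℝ × ℝ := t • a + (1 - t) • b with hx_def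
  set X := convexHull ℝ (insert x (E : Set (ℝ × ℝ))) with hX_def
  set A := convexHull ℝ (insert a (E : Set (ℝ × ℝ))) with hA_def
  set B := convexHull ℝ (insert b (E : Set (ℝ × ℝ))) with hB_def
  have hLcont : Continuous L := L.continuous_of_finiteDimensional
  have hXc : IsCompact X := ((E.finite_toSet.insert x).isCompact_convexHull ℝ)
  have hAc : IsCompact A := ((E.finite_toSet.insert a).isCompact_convexHull ℝ)
  have hBc : IsCompact B := ((E.finite_toSet.insert b).isCompact_convexHull ℝ)
  -- the condition for the images
  have hcond : ∀ z' ∈ L '' X, ∃ p' ∈ L '' A, ∃ q' ∈ L '' B,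
      p'.1 = z'.1 ∧ q'.1 = z'.1 ∧ z'.2 = t * p'.2 + (1 - t) * q'.2 := by
    rintro z' ⟨z, hz, rfl⟩
    rw [hX_def, convexHull_insert hEne', mem_convexJoin] at hz
    obtain ⟨x0, hx0, y, hy, hseg⟩ := hz
    rw [mem_singleton_iff] at hx0
    subst hx0
    obtain ⟨α, β, hα, hβ, hαβ, hzeq⟩ := hseg
    have haA : a ∈ A := subset_convexHull ℝ _ (mem_insert a _)
    have hbB : b ∈ B := subset_convexHull ℝ _ (mem_insert b _)
    have hyA : y ∈ A := convexHull_mono (subset_insert _ _) hy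
    have hyB : y ∈ B := convexHull_mono (subset_insert _ _) hy
    have hpA : α • a + β • y ∈ A :=
      (convex_convexHull ℝ _).segment_subset haA hyA ⟨α, β, hα, hβ, hαβ, rfl⟩
    have hqB : α • b + β • y ∈ B :=
      (convex_convexHull ℝ _).segment_subset hbB hyB ⟨α, β, hα, hβ, hαβ, rfl⟩
    refine ⟨L (α • a + β • y), mem_image_of_mem _ hpA,
      L (α • b + β • y), mem_image_of_mem _ hqB, ?_, ?_, ?_⟩
    · rw [← hzeq]
      show u.2 * (α • a + β • y).1 - u.1 * (α • a + β • y).2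
        = u.2 * (α • x + β • y).1 - u.1 * (α • x + β • y).2
      simp only [hx_def, hu_def, Prod.fst_add, Prod.snd_add, Prod.smul_fst, Prod.smul_snd,
        Prod.fst_sub, Prod.snd_sub, smul_eq_mul]
      ring
    · rw [← hzeq]
      show u.2 * (α • b + β • y).1 - u.1 * (α • b + β • y).2
        = u.2 * (α • x + β • y).1 - u.1 * (α • x + β • y).2
      simp only [hx_def, hu_def, Prod.fst_add, Prod.snd_add, Prod.smul_fst, Prod.smul_snd,
        Prod.fst_sub, Prod.snd_sub, smul_eq_mul]
      ring
    · have hzpq : z = t • (α • a + β • y) + (1 - t) • (α • b + β • y) := by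
        rw [← hzeq, hx_def]; module
      rw [hzpq, map_add, _root_.map_smul, _root_.map_smul]
      simp only [Prod.snd_add, Prod.smul_snd, smul_eq_mul]
  have hcore := core_slicing (L '' X) (L '' A) (L '' B) t ht0 ht1
    ((hXc.image hLcont).measurableSet)
    ((convex_convexHull ℝ _).linear_image L) ((hAc.image hLcont).measurableSet)
    ((hAc.image hLcont).isBounded)
    ((convex_convexHull ℝ _).linear_image L) ((hBc.image hLcont).measurableSet)
    ((hBc.image hLcont).isBounded)
    hcond
  rw [Measure.addHaar_image_linearMap, Measure.addHaar_image_linearMap,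
    Measure.addHaar_image_linearMap] at hcore
  set c := ENNReal.ofReal |LinearMap.det L| with hc_def
  have hc0 : c ≠ 0 := by
    rw [hc_def, ne_eq, ENNReal.ofReal_eq_zero, not_le]
    exact abs_pos.mpr (planeMap_det_ne u hu)
  have hctop : c ≠ ⊤ := ENNReal.ofReal_ne_top
  have hrw : ENNReal.ofReal t * (c * volume A) + ENNReal.ofReal (1 - t) * (c * volume B)
      = c * (ENNReal.ofReal t * volume A + ENNReal.ofReal (1 - t) * volume B) := by ring
  rw [hrw] at hcore
  exact (ENNReal.mul_le_mul_iff_right hc0 hctop).mp hcore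

/-- Among vertices we can find one maximizing the hull volume when a boundary point is replaced. -/
lemma exists_vertex_ge (V : Finset (ℝ × ℝ)) (hVne : V.Nonempty) (E : Finset (ℝ × ℝ))
    {x : ℝ × ℝ} (hx : x ∈ convexHull ℝ (V : Set (ℝ × ℝ))) :
    ∃ v ∈ V, volume (convexHull ℝ (insert x (E : Set (ℝ × ℝ)))) ≤
      volume (convexHull ℝ (insert v (E : Set (ℝ × ℝ)))) := by
  obtain ⟨v0, hv0, hmax⟩ := V.exists_max_image
    (fun v => volume (convexHull ℝ (insert v (E : Set (ℝ × ℝ))))) hVne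
  refine ⟨v0, hv0, ?_⟩
  set C : Set (ℝ × ℝ) := {y | volume (convexHull ℝ (insert y (E : Set (ℝ × ℝ)))) ≤
    volume (convexHull ℝ (insert v0 (E : Set (ℝ × ℝ))))} with hC_def
  have hCconv : Convex ℝ C := by
    intro p hp q hq α β hα hβ hαβ
    have hβ' : β = 1 - α := by linarith
    have h1 := seg_ineq E p q α hα (by linarith)
    rw [← hβ'] at h1
    have h2 : ENNReal.ofReal α * volume (convexHull ℝ (insert p (E : Set (ℝ × ℝ))))
        + ENNReal.ofReal β * volume (convexHull ℝ (insert q (E : Set (ℝ × ℝ))))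
        ≤ (ENNReal.ofReal α + ENNReal.ofReal β) *
          volume (convexHull ℝ (insert v0 (E : Set (ℝ × ℝ)))) := by
      rw [add_mul]
      exact add_le_add (mul_le_mul_right hp _) (mul_le_mul_right hq _)
    have h3 : ENNReal.ofReal α + ENNReal.ofReal β = 1 := by
      rw [← ENNReal.ofReal_add hα hβ, hαβ]; norm_num
    show volume (convexHull ℝ (insert (α • p + β • q) (E : Set (ℝ × ℝ)))) ≤ _
    calc volume (convexHull ℝ (insert (α • p + β • q) (E : Set (ℝ × ℝ))))
        ≤ _ := h1
      _ ≤ _ := h2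
      _ = _ := by rw [h3, one_mul]
  have hVC : (V : Set (ℝ × ℝ)) ⊆ C := fun v hv => hmax v hv
  exact convexHull_min hVC hCconv hx

/-- Replace all points of `S` by vertices of `V` without decreasing the hull volume. -/
lemma replace_by_vertices (V : Finset (ℝ × ℝ)) (hVne : V.Nonempty) :
    ∀ n (S : Finset (ℝ × ℝ)), (S \ V).card = n →
      (S : Set (ℝ × ℝ)) ⊆ convexHull ℝ (V : Set (ℝ × ℝ)) →
      ∃ T, T ⊆ V ∧ T.card ≤ S.card ∧
        volume (convexHull ℝ (S : Set (ℝ × ℝ))) ≤ volume (convexHull ℝ (T : Set (ℝ × ℝ))) := by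
  intro n
  induction n using Nat.strong_induction_on with
  | _ n ih =>
    intro S hcard hsub
    rcases eq_or_ne n 0 with rfl | hn
    · -- S ⊆ V
      have hSV : S ⊆ V := by
        intro s hs
        by_contra hsv
        have : s ∈ S \ V := Finset.mem_sdiff.mpr ⟨hs, hsv⟩
        have := Finset.card_pos.mpr ⟨s, this⟩
        omega
      exact ⟨S, hSV, le_refl _, le_refl _⟩
    · -- pick x ∈ S \ V
      have hpos : 0 < (S \ V).card := by omega
      obtain ⟨x, hxSV⟩ := Finset.card_pos.mp hpos
      obtain ⟨hxS, hxV⟩ := Finset.mem_sdiff.mp hxSV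
      have hxhull : x ∈ convexHull ℝ (V : Set (ℝ × ℝ)) := hsub hxS
      obtain ⟨v, hvV, hle⟩ := exists_vertex_ge V hVne (S.erase x) hxhull
      set S' := insert v (S.erase x) with hS'_def
      have hS'sub : (S' : Set (ℝ × ℝ)) ⊆ convexHull ℝ (V : Set (ℝ × ℝ)) := by
        intro z hz
        rw [hS'_def] at hz
        simp only [Finset.coe_insert, mem_insert_iff] at hz
        rcases hz with rfl | hz
        · exact subset_convexHull ℝ _ hvV
        · exact hsub (Finset.mem_coe.mpr (Finset.mem_of_mem_erase (Finset.mem_coe.mp hz)))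
      have hS'card : S'.card ≤ S.card := by
        calc S'.card ≤ (S.erase x).card + 1 := Finset.card_insert_le _ _
          _ = S.card := by
            have hSpos : 0 < S.card := Finset.card_pos.mpr ⟨x, hxS⟩
            rw [Finset.card_erase_of_mem hxS]; omega
      have hsdiff : S' \ V = (S \ V).erase x := by
        ext z
        simp only [hS'_def, Finset.mem_sdiff, Finset.mem_insert, Finset.mem_erase]
        constructor
        · rintro ⟨rfl | ⟨hzx, hzS⟩, hzV⟩
          · exact absurd hvV hzV
          · exact ⟨hzx, hzS, hzV⟩
        · rintro ⟨hzx, hzS, hzV⟩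
          exact ⟨Or.inr ⟨hzx, hzS⟩, hzV⟩
      have hlt : (S' \ V).card < n := by
        rw [hsdiff, Finset.card_erase_of_mem hxSV, hcard]
        omega
      obtain ⟨T, hTV, hTcard, hTvol⟩ := ih _ hlt S' rfl hS'sub
      refine ⟨T, hTV, le_trans hTcard hS'card, ?_⟩
      refine le_trans ?_ hTvol
      have hSeq : (S : Set (ℝ × ℝ)) = insert x ((S.erase x : Finset (ℝ × ℝ)) : Set (ℝ × ℝ)) := by
        rw [← Finset.coe_insert, Finset.insert_erase hxS]
      have hS'eq : (S' : Set (ℝ × ℝ)) = insert v ((S.erase x : Finset (ℝ × ℝ)) : Set (ℝ × ℝ)) := by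
        rw [hS'_def, Finset.coe_insert]
      rw [hSeq, hS'eq]
      exact hle

/-- A maximum-area inscribed `k`-gon can be chosen with its vertices at vertices of `P`. -/
theorem max_area_kgon_at_vertices (V : Finset (ℝ × ℝ)) (k : ℕ) (hk : 3 ≤ k)
    (hV : k ≤ V.card)
    (hconv : ∀ v ∈ V, v ∉ convexHull ℝ ((V.erase v : Finset (ℝ × ℝ)) : Set (ℝ × ℝ))) :
    ∃ T ⊆ V, T.card = k ∧
      ∀ S : Finset (ℝ × ℝ), S.card = k →
        (S : Set (ℝ × ℝ)) ⊆ frontier (convexHull ℝ (V : Set (ℝ × ℝ))) →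
        hullArea S ≤ hullArea T := by
  have hVne : V.Nonempty := Finset.card_pos.mp (by omega)
  set 𝒯 := V.powerset.filter (fun T => T.card = k) with h𝒯_def
  have h𝒯ne : 𝒯.Nonempty := by
    obtain ⟨T0, hT0, hT0c⟩ := Finset.exists_subset_card_eq hV
    exact ⟨T0, Finset.mem_filter.mpr ⟨Finset.mem_powerset.mpr hT0, hT0c⟩⟩
  obtain ⟨T, hT𝒯, hTmax⟩ := 𝒯.exists_max_image (fun T => hullArea T) h𝒯ne
  obtain ⟨hTV, hTcard⟩ := Finset.mem_filter.mp hT𝒯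
  rw [Finset.mem_powerset] at hTV
  refine ⟨T, hTV, hTcard, ?_⟩
  intro S hScard hSfront
  have hclosed : IsClosed (convexHull ℝ (V : Set (ℝ × ℝ))) :=
    (V.finite_toSet.isCompact_convexHull ℝ).isClosed
  have hSsub : (S : Set (ℝ × ℝ)) ⊆ convexHull ℝ (V : Set (ℝ × ℝ)) := by
    intro z hz
    have h1 := frontier_subset_closure (hSfront hz)
    rwa [hclosed.closure_eq] at h1
  obtain ⟨T1, hT1V, hT1card, hT1vol⟩ := replace_by_vertices V hVne _ S rfl hSsub
  have hT1k : T1.card ≤ k := hScard ▸ hT1card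
  obtain ⟨T2, hT12, hT2V, hT2card⟩ := Finset.exists_subsuperset_card_eq hT1V hT1k hV
  have hT2𝒯 : T2 ∈ 𝒯 := Finset.mem_filter.mpr ⟨Finset.mem_powerset.mpr hT2V, hT2card⟩
  calc hullArea S = volume (convexHull ℝ (S : Set (ℝ × ℝ))) := rfl
    _ ≤ volume (convexHull ℝ (T1 : Set (ℝ × ℝ))) := hT1vol
    _ ≤ volume (convexHull ℝ (T2 : Set (ℝ × ℝ))) :=
        measure_mono (convexHull_mono (by exact_mod_cast hT12))
    _ = hullArea T2 := rfl
    _ ≤ hullArea T := hTmax T2 hT2𝒯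
end

section
/- If a point v lies in the open segment between two points u and w on the boundary of a convex region, then the area of a triangle with apex v over a fixed base is at most the maximum of the areas obtained by replacing v with u or with w; consequently, a maximum-area triangle inscribed in a convex polygon has all vertices at vertices of the polygon. -/
open MeasureTheory

/-- `triArea · q r` is a convex function of the apex. -/
lemma convexOn_triArea (q r : ℝ × ℝ) : ConvexOn ℝ Set.univ (fun p => triArea p q r) := by
  refine ⟨convex_univ, ?_⟩
  intro x _ y _ a b ha hb hab
  have hb' : b = 1 - a := by linarith
  simp only [triArea, smul_eq_mul]
  have h1 : (a • x + b • y).1 = a * x.1 + b * y.1 := by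
    simp [Prod.fst_add, Prod.smul_fst]
  have h2 : (a • x + b • y).2 = a * x.2 + b * y.2 := by
    simp [Prod.snd_add, Prod.smul_snd]
  rw [h1, h2]
  have key : (q.1 - (a * x.1 + b * y.1)) * (r.2 - (a * x.2 + b * y.2)) -
      (q.2 - (a * x.2 + b * y.2)) * (r.1 - (a * x.1 + b * y.1)) =
      a * ((q.1 - x.1) * (r.2 - x.2) - (q.2 - x.2) * (r.1 - x.1)) +
      b * ((q.1 - y.1) * (r.2 - y.2) - (q.2 - y.2) * (r.1 - y.1)) := by
    subst hb'; ring
  rw [key]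
  calc |a * _ + b * _| / 2 ≤ (|a * _| + |b * _|) / 2 := by
        gcongr; exact abs_add_le _ _
    _ = a * (|_| / 2) + b * (|_| / 2) := by
        rw [abs_mul, abs_mul, abs_of_nonneg ha, abs_of_nonneg hb]; ring

/-- `triArea` is invariant under cyclic permutations. -/
lemma triArea_cycle (p q r : ℝ × ℝ) : triArea p q r = triArea q r p := by
  unfold triArea
  congr 1
  rw [show (r.1 - q.1) * (p.2 - q.2) - (r.2 - q.2) * (p.1 - q.1) =
    (q.1 - p.1) * (r.2 - p.2) - (q.2 - p.2) * (r.1 - p.1) from by ring]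

lemma triArea_nonneg (p q r : ℝ × ℝ) : 0 ≤ triArea p q r := by
  unfold triArea; positivity

noncomputable def stdTriVol : ENNReal :=
  volume (convexHull ℝ ({(0,0),(1,0),(0,1)} : Set (ℝ × ℝ)))

open Pointwise in
lemma hull_tri_volume (p q r : ℝ × ℝ) :
    volume (convexHull ℝ ({p, q, r} : Set (ℝ × ℝ))) =
      ENNReal.ofReal (2 * triArea p q r) * stdTriVol := by
  set L := Matrix.toLin (Module.Basis.finTwoProd ℝ) (Module.Basis.finTwoProd ℝ)
    !![q.1 - p.1, r.1 - p.1; q.2 - p.2, r.2 - p.2] with hL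
  have h0 : L ((0 : ℝ), (0 : ℝ)) = (0, 0) := by
    rw [hL, Matrix.toLin_finTwoProd_apply]; norm_num
  have h1 : L ((1 : ℝ), (0 : ℝ)) = (q.1 - p.1, q.2 - p.2) := by
    rw [hL, Matrix.toLin_finTwoProd_apply]; norm_num
  have h2 : L ((0 : ℝ), (1 : ℝ)) = (r.1 - p.1, r.2 - p.2) := by
    rw [hL, Matrix.toLin_finTwoProd_apply]; norm_num
  have himg : ({p, q, r} : Set (ℝ × ℝ)) = p +ᵥ (L '' {(0,0),(1,0),(0,1)}) := by
    rw [Set.image_insert_eq, Set.image_insert_eq, Set.image_singleton, h0, h1, h2,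
      ← Set.image_vadd, Set.image_insert_eq, Set.image_insert_eq, Set.image_singleton]
    have e1 : p +ᵥ ((0:ℝ), (0:ℝ)) = p := by simp [vadd_eq_add, Prod.ext_iff]
    have e2 : p +ᵥ (q.1 - p.1, q.2 - p.2) = q := by simp [vadd_eq_add, Prod.ext_iff]
    have e3 : p +ᵥ (r.1 - p.1, r.2 - p.2) = r := by simp [vadd_eq_add, Prod.ext_iff]
    rw [e1, e2, e3]
  have hdet : |LinearMap.det L| = 2 * triArea p q r := by
    rw [hL, LinearMap.det_toLin, Matrix.det_fin_two_of, triArea]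
    rw [show (q.1 - p.1) * (r.2 - p.2) - (r.1 - p.1) * (q.2 - p.2) =
      (q.1 - p.1) * (r.2 - p.2) - (q.2 - p.2) * (r.1 - p.1) from by ring]
    ring
  rw [himg, convexHull_vadd, measure_vadd, ← L.image_convexHull,
    Measure.addHaar_image_linearMap, hdet]
  rfl

/-- `hullArea` of a triangle with distinct vertices. -/
lemma hullArea_eq (p q r : ℝ × ℝ) (_h : p ≠ q) (_h' : p ≠ r) (_h'' : q ≠ r) :
    hullArea ({p, q, r} : Finset (ℝ × ℝ)) = ENNReal.ofReal (2 * triArea p q r) * stdTriVol := by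
  rw [hullArea, ← hull_tri_volume]
  congr 1
  push_cast
  simp

/-- Moving the apex of a triangle along an open segment of the boundary of a convex
region cannot beat both endpoints; consequently a maximum-area inscribed triangle has
its vertices at vertices of the polygon. -/
theorem apex_on_segment_and_max_triangle :
    (∀ (K : Set (ℝ × ℝ)), Convex ℝ K → ∀ u v w b c : ℝ × ℝ,
      u ∈ frontier K → w ∈ frontier K → v ∈ openSegment ℝ u w →
      triArea v b c ≤ max (triArea u b c) (triArea w b c)) ∧
    (∀ V : Finset (ℝ × ℝ), 3 ≤ V.card →
      (∀ v ∈ V, v ∉ convexHull ℝ ((V.erase v : Finset (ℝ × ℝ)) : Set (ℝ × ℝ))) →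
      ∃ T ⊆ V, T.card = 3 ∧
        ∀ S : Finset (ℝ × ℝ), S.card = 3 →
          (S : Set (ℝ × ℝ)) ⊆ frontier (convexHull ℝ (V : Set (ℝ × ℝ))) →
          hullArea S ≤ hullArea T) := by
  constructor
  · -- Part 1
    intro K _ u v w b c _ _ hv
    have hv' : v ∈ segment ℝ u w := openSegment_subset_segment ℝ u w hv
    obtain ⟨a, a', ha, ha', hab, rfl⟩ := hv'
    have := (convexOn_triArea b c).2 (Set.mem_univ u) (Set.mem_univ w) ha ha' hab
    refine this.trans ?_
    simp only [smul_eq_mul]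
    have h1 : triArea u b c ≤ max (triArea u b c) (triArea w b c) := le_max_left _ _
    have h2 : triArea w b c ≤ max (triArea u b c) (triArea w b c) := le_max_right _ _
    have hm : a * max (triArea u b c) (triArea w b c) +
        a' * max (triArea u b c) (triArea w b c) = max (triArea u b c) (triArea w b c) := by
      rw [← add_mul, hab, one_mul]
    linarith [mul_le_mul_of_nonneg_left h1 ha, mul_le_mul_of_nonneg_left h2 ha']
  · -- Part 2
    intro V hV3 _hvert
    have hne : (Finset.powersetCard 3 V).Nonempty := by
      rw [Finset.powersetCard_nonempty]; exact hV3
    obtain ⟨T, hTmem, hTmax⟩ := Finset.exists_max_image (Finset.powersetCard 3 V) hullArea hne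
    rw [Finset.mem_powersetCard] at hTmem
    refine ⟨T, hTmem.1, hTmem.2, ?_⟩
    intro S hS3 hSsub
    obtain ⟨p, q, r, hpq, hpr, hqr, rfl⟩ := Finset.card_eq_three.mp hS3
    -- the three points lie in the convex hull of V
    have hclosed : IsClosed (convexHull ℝ (V : Set (ℝ × ℝ))) :=
      V.finite_toSet.isClosed_convexHull ℝ
    have hfr : frontier (convexHull ℝ (V : Set (ℝ × ℝ))) ⊆ convexHull ℝ (V : Set (ℝ × ℝ)) :=
      hclosed.frontier_subset
    have hp : p ∈ convexHull ℝ (V : Set (ℝ × ℝ)) := hfr (hSsub (by simp))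
    have hq : q ∈ convexHull ℝ (V : Set (ℝ × ℝ)) := hfr (hSsub (by simp))
    have hr : r ∈ convexHull ℝ (V : Set (ℝ × ℝ)) := hfr (hSsub (by simp))
    -- replace each vertex by a vertex of V, not decreasing the area
    obtain ⟨p', hp'V, hp'⟩ :=
      (convexOn_triArea q r).exists_ge_of_mem_convexHull (Set.subset_univ _) hp
    have hq1 : triArea p' q r = triArea q r p' := triArea_cycle _ _ _
    obtain ⟨q', hq'V, hq'⟩ :=
      (convexOn_triArea r p').exists_ge_of_mem_convexHull (Set.subset_univ _) hq
    have hq2 : triArea q' r p' = triArea r p' q' := triArea_cycle _ _ _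
    obtain ⟨r', hr'V, hr'⟩ :=
      (convexOn_triArea p' q').exists_ge_of_mem_convexHull (Set.subset_univ _) hr
    have hchain : triArea p q r ≤ triArea r' p' q' := by
      calc triArea p q r ≤ triArea p' q r := hp'
        _ = triArea q r p' := hq1
        _ ≤ triArea q' r p' := hq'
        _ = triArea r p' q' := hq2
        _ ≤ triArea r' p' q' := hr'
    have hPQR : triArea p q r ≤ triArea p' q' r' := by
      rw [triArea_cycle p' q' r', triArea_cycle q' r' p'] ; exact hchain
    -- finish
    have hSarea : hullArea {p, q, r} = ENNReal.ofReal (2 * triArea p q r) * stdTriVol :=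
      hullArea_eq p q r hpq hpr hqr
    by_cases hdist : p' ≠ q' ∧ p' ≠ r' ∧ q' ≠ r'
    · obtain ⟨d1, d2, d3⟩ := hdist
      have hT' : ({p', q', r'} : Finset (ℝ × ℝ)) ∈ Finset.powersetCard 3 V := by
        rw [Finset.mem_powersetCard]
        refine ⟨?_, Finset.card_eq_three.mpr ⟨p', q', r', d1, d2, d3, rfl⟩⟩
        intro x hx
        simp only [Finset.mem_insert, Finset.mem_singleton] at hx
        rcases hx with rfl | rfl | rfl <;> assumption
      calc hullArea {p, q, r} = ENNReal.ofReal (2 * triArea p q r) * stdTriVol := hSarea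
        _ ≤ ENNReal.ofReal (2 * triArea p' q' r') * stdTriVol :=
            mul_le_mul_left (ENNReal.ofReal_le_ofReal (by linarith)) _
        _ = hullArea {p', q', r'} := (hullArea_eq p' q' r' d1 d2 d3).symm
        _ ≤ hullArea T := hTmax _ hT'
    · -- degenerate: the replaced triangle has zero area, hence so does the original
      have deg : ∀ x y z : ℝ × ℝ, (x = y ∨ x = z ∨ y = z) → triArea x y z = 0 := by
        rintro x y z (rfl | rfl | rfl) <;>
          · unfold triArea
            rw [abs_eq_zero.mpr (by ring)]
            norm_num
      have hzero : triArea p' q' r' = 0 := by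
        push_neg at hdist
        rcases eq_or_ne p' q' with h1 | h1
        · exact deg _ _ _ (Or.inl h1)
        rcases eq_or_ne p' r' with h2 | h2
        · exact deg _ _ _ (Or.inr (Or.inl h2))
        · exact deg _ _ _ (Or.inr (Or.inr (hdist h1 h2)))
      have : triArea p q r = 0 :=
        le_antisymm (hzero ▸ hPQR) (triArea_nonneg _ _ _)
      rw [hSarea, this]
      simp
end

section
/- With the 16 points a1,…,a16 as above, the quadrilateral a4 a8 a12 a16 has strictly larger area than every quadrilateral whose four vertices are chosen among a1,…,a16 other than {a4,a8,a12,a16}; i.e., a4 a8 a12 a16 is the unique maximum-area quadrilateral with vertices among these 16 points. -/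
open MeasureTheory

noncomputable def a1 : ℝ × ℝ := (26096, 6750)
noncomputable def a2 : ℝ × ℝ := (26130, 9933)
noncomputable def a3 : ℝ × ℝ := (25940, 10728)
noncomputable def a4 : ℝ × ℝ := (23090, 22189)
noncomputable def a5 : ℝ × ℝ := (18106, 23681)
noncomputable def a6 : ℝ × ℝ := (13484, 24407)
noncomputable def a7 : ℝ × ℝ := (13174, 24343)
noncomputable def a8 : ℝ × ℝ := (3090, 22189)
noncomputable def a9 : ℝ × ℝ := (0, 17308)
noncomputable def a10 : ℝ × ℝ := (80, 14350)
noncomputable def a11 : ℝ × ℝ := (323, 13331)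
noncomputable def a12 : ℝ × ℝ := (3090, 2189)
noncomputable def a13 : ℝ × ℝ := (8459, 385)
noncomputable def a14 : ℝ × ℝ := (12837, 0)
noncomputable def a15 : ℝ × ℝ := (13392, 114)
noncomputable def a16 : ℝ × ℝ := (23090, 2189)

/-- The 16 vertices of the counterexample polygon, in counterclockwise order. -/
noncomputable def pts : Fin 16 → ℝ × ℝ :=
  ![a1, a2, a3, a4, a5, a6, a7, a8, a9, a10, a11, a12, a13, a14, a15, a16]


/-! ### Auxiliary material -/

/-- Integer coordinates of the 16 points. -/
def ptsZ : Fin 16 → ℤ × ℤ :=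
  ![(26096, 6750), (26130, 9933), (25940, 10728), (23090, 22189), (18106, 23681),
    (13484, 24407), (13174, 24343), (3090, 22189), (0, 17308), (80, 14350),
    (323, 13331), (3090, 2189), (8459, 385), (12837, 0), (13392, 114), (23090, 2189)]

/-- Twice the signed area, as an integer, of the triangle on points `i j k`. -/
def d2 (i j k : Fin 16) : ℤ :=
  ((ptsZ j).1 - (ptsZ i).1) * ((ptsZ k).2 - (ptsZ i).2)
    - ((ptsZ j).2 - (ptsZ i).2) * ((ptsZ k).1 - (ptsZ i).1)

theorem F1 : ∀ i j k : Fin 16, i < j → j < k → 0 < d2 i j k := by decide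

theorem F2 : ∀ i j k l : Fin 16, i < j → j < k → k < l →
    ¬(i = 3 ∧ j = 7 ∧ k = 11 ∧ l = 15) → d2 i j k + d2 i k l < 800000000 := by decide

theorem FInj : ∀ i j : Fin 16, ptsZ i = ptsZ j → i = j := by decide

lemma pts_eq (i : Fin 16) : pts i = (((ptsZ i).1 : ℝ), ((ptsZ i).2 : ℝ)) := by
  fin_cases i <;>
    norm_num [pts, ptsZ, a1, a2, a3, a4, a5, a6, a7, a8, a9, a10, a11, a12, a13, a14, a15, a16]

lemma pts_inj : Function.Injective pts := by
  intro i j h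
  apply FInj
  rw [pts_eq i, pts_eq j] at h
  have h1 : ((ptsZ i).1 : ℝ) = ((ptsZ j).1 : ℝ) := congrArg Prod.fst h
  have h2 : ((ptsZ i).2 : ℝ) = ((ptsZ j).2 : ℝ) := congrArg Prod.snd h
  exact Prod.ext (by exact_mod_cast h1) (by exact_mod_cast h2)

lemma sArea_cast (i j k : Fin 16) :
    sArea (pts i) (pts j) (pts k) = ((d2 i j k : ℤ) : ℝ) / 2 := by
  rw [pts_eq i, pts_eq j, pts_eq k]
  simp only [sArea, d2]
  push_cast
  ring

lemma tri_mem {p q r z : ℝ × ℝ} (hd : 0 < sArea p q r) (h1 : 0 ≤ sArea z q r)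
    (h2 : 0 ≤ sArea p z r) (h3 : 0 ≤ sArea p q z) :
    z ∈ convexHull ℝ ({p, q, r} : Set (ℝ × ℝ)) := by
  have hsum : sArea z q r + sArea p z r + sArea p q z = sArea p q r := by
    simp only [sArea]; ring
  have key : (Finset.univ : Finset (Fin 3)).centerMass ![sArea z q r, sArea p z r, sArea p q z]
      ![p, q, r] = z := by
    rw [Finset.centerMass]
    rw [Fin.sum_univ_three, Fin.sum_univ_three]
    simp only [Matrix.cons_val_zero, Matrix.cons_val_one, Matrix.head_cons,
      Matrix.cons_val_two, Matrix.tail_cons]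
    rw [hsum]
    have hd' : sArea p q r ≠ 0 := ne_of_gt hd
    apply Prod.ext <;>
    · simp only [Prod.smul_fst, Prod.smul_snd, Prod.fst_add, Prod.snd_add, smul_eq_mul]
      field_simp
      simp only [sArea]
      ring
  rw [← key]
  apply Finset.centerMass_mem_convexHull
  · intro i _
    fin_cases i <;> simpa using ‹_›
  · rw [Fin.sum_univ_three]
    simp only [Matrix.cons_val_zero, Matrix.cons_val_one, Matrix.head_cons,
      Matrix.cons_val_two, Matrix.tail_cons]
    rw [hsum]; exact hd
  · intro i _
    fin_cases i <;> simp

lemma sArea_affine (a b x y : ℝ × ℝ) {s t : ℝ} (hst : s + t = 1) :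
    sArea a b (s • x + t • y) = s * sArea a b x + t * sArea a b y := by
  have ht : t = 1 - s := by linarith
  subst ht
  simp only [sArea, Prod.fst_add, Prod.snd_add, Prod.smul_fst, Prod.smul_snd, smul_eq_mul]
  ring

lemma halfplane_convex (a b : ℝ × ℝ) : Convex ℝ {z : ℝ × ℝ | 0 ≤ sArea a b z} := by
  intro x hx y hy s t hs ht hst
  simp only [Set.mem_setOf_eq] at *
  rw [sArea_affine a b x y hst]
  positivity

lemma quad_split {p q r s : ℝ × ℝ} (h1 : 0 < sArea p q r) (h2 : 0 < sArea p r s)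
    (h3 : 0 ≤ sArea p q s) (h4 : 0 ≤ sArea q r s) :
    convexHull ℝ ({p, q, r, s} : Set (ℝ × ℝ)) ⊆
      convexHull ℝ ({p, q, r} : Set (ℝ × ℝ)) ∪ convexHull ℝ ({p, r, s} : Set (ℝ × ℝ)) := by
  have hsub : convexHull ℝ ({p, q, r, s} : Set (ℝ × ℝ)) ⊆
      ({z : ℝ × ℝ | 0 ≤ sArea p q z} ∩ {z | 0 ≤ sArea q r z}) ∩
      ({z | 0 ≤ sArea r s z} ∩ {z | 0 ≤ sArea s p z}) := by
    apply convexHull_min _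
      (((halfplane_convex p q).inter (halfplane_convex q r)).inter
        ((halfplane_convex r s).inter (halfplane_convex s p)))
    rintro w (rfl | rfl | rfl | rfl) <;>
      refine ⟨⟨?_, ?_⟩, ?_, ?_⟩ <;>
      · simp only [Set.mem_setOf_eq]
        simp only [sArea] at h1 h2 h3 h4 ⊢
        linarith
  intro z hz
  obtain ⟨⟨Hpq, Hqr⟩, Hrs, Hsp⟩ := hsub hz
  rcases le_or_gt 0 (sArea p r z) with hpr | hpr
  · right
    refine tri_mem h2 ?_ ?_ hpr <;>
    · simp only [Set.mem_setOf_eq, sArea] at Hrs Hsp ⊢; linarith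
  · left
    refine tri_mem h1 ?_ ?_ ?_ <;>
    · simp only [Set.mem_setOf_eq, sArea] at Hqr Hpq hpr ⊢; linarith

/-- The standard closed triangle with vertices `(0,0)`, `(1,0)`, `(0,1)`. -/
def Tset : Set (ℝ × ℝ) := {z | 0 ≤ z.1 ∧ 0 ≤ z.2 ∧ z.1 + z.2 ≤ 1}

lemma Tset_vol : volume Tset ≤ ENNReal.ofReal (1 / 2) := by
  have hm : MeasurableSet Tset := by
    apply MeasurableSet.inter (measurableSet_le measurable_const measurable_fst)
    exact (measurableSet_le measurable_const measurable_snd).inter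
      (measurableSet_le (measurable_fst.add measurable_snd) measurable_const)
  rw [show (volume : Measure (ℝ × ℝ)) = (volume : Measure ℝ).prod volume from
    MeasureTheory.Measure.volume_eq_prod ℝ ℝ, Measure.prod_apply hm]
  have hslice : ∀ x : ℝ, volume (Prod.mk x ⁻¹' Tset) =
      Set.indicator (Set.Icc (0:ℝ) 1) (fun x => ENNReal.ofReal (1 - x)) x := by
    intro x
    rcases le_or_gt 0 x with hx | hx
    · have : Prod.mk x ⁻¹' Tset = Set.Icc 0 (1 - x) := by
        ext y
        simp only [Tset, Set.mem_preimage, Set.mem_setOf_eq, Set.mem_Icc]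
        constructor
        · rintro ⟨_, h2, h3⟩; exact ⟨h2, by linarith⟩
        · rintro ⟨h2, h3⟩; exact ⟨hx, h2, by linarith⟩
      rw [this, Real.volume_Icc]
      rcases le_or_gt x 1 with hx1 | hx1
      · rw [Set.indicator_of_mem (by exact ⟨hx, hx1⟩)]
        norm_num
      · rw [Set.indicator_of_notMem (by simp [hx1.not_ge])]
        rw [ENNReal.ofReal_eq_zero]
        linarith
    · have : Prod.mk x ⁻¹' Tset = ∅ := by
        ext y
        simp only [Tset, Set.mem_preimage, Set.mem_setOf_eq, Set.mem_empty_iff_false, iff_false]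
        rintro ⟨h1, _⟩; linarith
      rw [this, measure_empty, Set.indicator_of_notMem (by simp [hx.not_ge])]
  calc ∫⁻ x, volume (Prod.mk x ⁻¹' Tset) ∂volume
      = ∫⁻ x, Set.indicator (Set.Icc (0:ℝ) 1) (fun x => ENNReal.ofReal (1 - x)) x ∂volume := by
        exact lintegral_congr hslice
    _ = ∫⁻ x in Set.Icc (0:ℝ) 1, ENNReal.ofReal (1 - x) ∂volume := by
        rw [lintegral_indicator measurableSet_Icc _]
    _ = ENNReal.ofReal (∫ x in Set.Icc (0:ℝ) 1, (1 - x) ∂volume) := by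
        rw [← MeasureTheory.ofReal_integral_eq_lintegral_ofReal]
        · exact (Continuous.integrableOn_Icc (by continuity))
        · filter_upwards [ae_restrict_mem measurableSet_Icc] with x hx
          simp only [Pi.zero_apply]
          linarith [hx.2]
    _ ≤ ENNReal.ofReal (1 / 2) := by
        apply ENNReal.ofReal_le_ofReal
        rw [MeasureTheory.integral_Icc_eq_integral_Ioc,
          ← intervalIntegral.integral_of_le (zero_le_one)]
        rw [intervalIntegral.integral_sub intervalIntegrable_const
          intervalIntegral.intervalIntegrable_id]
        simp [integral_id]
        norm_num

lemma Tset_convex : Convex ℝ Tset := by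
  intro x hx y hy s t hs ht hst
  obtain ⟨hx1, hx2, hx3⟩ := hx
  obtain ⟨hy1, hy2, hy3⟩ := hy
  simp only [Tset, Set.mem_setOf_eq, Prod.fst_add, Prod.snd_add, Prod.smul_fst, Prod.smul_snd,
    smul_eq_mul] at *
  refine ⟨by positivity, by positivity, ?_⟩
  nlinarith [mul_le_mul_of_nonneg_left hx3 hs, mul_le_mul_of_nonneg_left hy3 ht]

lemma tri_vol {p q r : ℝ × ℝ} (h : 0 ≤ sArea p q r) :
    volume (convexHull ℝ ({p, q, r} : Set (ℝ × ℝ))) ≤ ENNReal.ofReal (sArea p q r) := by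
  set M : Matrix (Fin 2) (Fin 2) ℝ := !![q.1 - p.1, r.1 - p.1; q.2 - p.2, r.2 - p.2] with hM
  set f : (ℝ × ℝ) →ₗ[ℝ] (ℝ × ℝ) := Matrix.toLin (Module.Basis.finTwoProd ℝ) (Module.Basis.finTwoProd ℝ) M
    with hf
  have hdet : LinearMap.det f = 2 * sArea p q r := by
    rw [hf, LinearMap.det_toLin, hM, Matrix.det_fin_two_of, sArea]
    ring
  have happ : ∀ x : ℝ × ℝ, f x = ((q.1 - p.1) * x.1 + (r.1 - p.1) * x.2,
      (q.2 - p.2) * x.1 + (r.2 - p.2) * x.2) := by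
    intro x
    rw [hf, hM, Matrix.toLin_finTwoProd_apply]
  have himg : (fun x => p + f x) '' ({((0:ℝ),(0:ℝ)), ((1:ℝ),(0:ℝ)), ((0:ℝ),(1:ℝ))} : Set (ℝ × ℝ))
      = ({p, q, r} : Set (ℝ × ℝ)) := by
    have e0 : p + f ((0:ℝ),(0:ℝ)) = p := by rw [happ]; apply Prod.ext <;> simp
    have e1 : p + f ((1:ℝ),(0:ℝ)) = q := by rw [happ]; apply Prod.ext <;> simp
    have e2 : p + f ((0:ℝ),(1:ℝ)) = r := by rw [happ]; apply Prod.ext <;> simp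
    rw [Set.image_insert_eq, Set.image_insert_eq, Set.image_singleton, e0, e1, e2]
  set A : (ℝ × ℝ) →ᵃ[ℝ] (ℝ × ℝ) :=
    (AffineEquiv.constVAdd ℝ (ℝ × ℝ) p).toAffineMap.comp f.toAffineMap with hA
  have hAapp : ∀ x, A x = p + f x := fun x => rfl
  have hhull : convexHull ℝ ({p, q, r} : Set (ℝ × ℝ)) =
      A '' (convexHull ℝ ({((0:ℝ),(0:ℝ)), ((1:ℝ),(0:ℝ)), ((0:ℝ),(1:ℝ))} : Set (ℝ × ℝ))) := by
    rw [AffineMap.image_convexHull]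
    congr 1
    rw [show ⇑A = (fun x => p + f x) from rfl, himg]
  have hsub : convexHull ℝ ({((0:ℝ),(0:ℝ)), ((1:ℝ),(0:ℝ)), ((0:ℝ),(1:ℝ))} : Set (ℝ × ℝ))
      ⊆ Tset := by
    apply convexHull_min _ Tset_convex
    rintro w (rfl | rfl | rfl) <;> exact ⟨by norm_num, by norm_num, by norm_num⟩
  calc volume (convexHull ℝ ({p, q, r} : Set (ℝ × ℝ)))
      ≤ volume (A '' Tset) := by
        rw [hhull]; exact measure_mono (Set.image_mono hsub)
    _ = volume (f '' Tset) := by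
        have hA2 : ⇑A '' Tset = (fun y => p + y) '' (⇑f '' Tset) := by
          rw [Set.image_image]
          exact Set.image_congr fun x _ => hAapp x
        rw [hA2, Set.image_add_left, measure_preimage_add]
    _ = ENNReal.ofReal |LinearMap.det f| * volume Tset := by
        exact Measure.addHaar_image_linearMap volume f Tset
    _ ≤ ENNReal.ofReal (2 * sArea p q r) * ENNReal.ofReal (1 / 2) := by
        rw [hdet]
        apply mul_le_mul' (by rw [abs_of_nonneg (by linarith)]) Tset_vol
    _ = ENNReal.ofReal (sArea p q r) := by
        rw [← ENNReal.ofReal_mul (by linarith)]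
        congr 1
        ring

lemma quad_vol (i j k l : Fin 16) (hij : i < j) (hjk : j < k) (hkl : k < l) :
    volume (convexHull ℝ ({pts i, pts j, pts k, pts l} : Set (ℝ × ℝ))) ≤
      ENNReal.ofReal (((d2 i j k + d2 i k l : ℤ) : ℝ) / 2) := by
  have cast_pos : ∀ a b c : Fin 16, a < b → b < c → 0 < sArea (pts a) (pts b) (pts c) := by
    intro a b c hab hbc
    rw [sArea_cast]
    have := F1 a b c hab hbc
    have : (0:ℝ) < ((d2 a b c : ℤ) : ℝ) := by exact_mod_cast this
    linarith
  have s1 := cast_pos i j k hij hjk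
  have s2 := cast_pos i k l (hij.trans hjk) hkl
  have s3 := cast_pos i j l hij (hjk.trans hkl)
  have s4 := cast_pos j k l hjk hkl
  calc volume (convexHull ℝ ({pts i, pts j, pts k, pts l} : Set (ℝ × ℝ)))
      ≤ volume (convexHull ℝ ({pts i, pts j, pts k} : Set (ℝ × ℝ)) ∪
          convexHull ℝ ({pts i, pts k, pts l} : Set (ℝ × ℝ))) :=
        measure_mono (quad_split s1 s2 s3.le s4.le)
    _ ≤ volume (convexHull ℝ ({pts i, pts j, pts k} : Set (ℝ × ℝ))) +
          volume (convexHull ℝ ({pts i, pts k, pts l} : Set (ℝ × ℝ))) := measure_union_le _ _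
    _ ≤ ENNReal.ofReal (sArea (pts i) (pts j) (pts k)) +
          ENNReal.ofReal (sArea (pts i) (pts k) (pts l)) := add_le_add (tri_vol s1.le) (tri_vol s2.le)
    _ = ENNReal.ofReal (((d2 i j k + d2 i k l : ℤ) : ℝ) / 2) := by
        have e1 := sArea_cast i j k
        have e2 := sArea_cast i k l
        have n1 : (0:ℝ) ≤ ((d2 i j k : ℤ) : ℝ) / 2 := by rw [← e1]; exact s1.le
        have n2 : (0:ℝ) ≤ ((d2 i k l : ℤ) : ℝ) / 2 := by rw [← e2]; exact s2.le
        rw [e1, e2, ← ENNReal.ofReal_add n1 n2]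
        congr 1
        push_cast
        ring

lemma square_vol :
    volume (convexHull ℝ (({a4, a8, a12, a16} : Finset (ℝ × ℝ)) : Set (ℝ × ℝ))) =
      ENNReal.ofReal 400000000 := by
  have hset : (({a4, a8, a12, a16} : Finset (ℝ × ℝ)) : Set (ℝ × ℝ)) =
      (({3090, 23090} : Set ℝ) ×ˢ ({2189, 22189} : Set ℝ)) := by
    ext z
    simp only [Finset.coe_insert, Finset.coe_singleton, Set.mem_insert_iff, Set.mem_singleton_iff,
      Set.mem_prod, a4, a8, a12, a16, Prod.ext_iff]
    constructor
    · rintro (⟨h1, h2⟩ | ⟨h1, h2⟩ | ⟨h1, h2⟩ | ⟨h1, h2⟩) <;> simp [h1, h2]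
    · rintro ⟨(h1 | h1), (h2 | h2)⟩ <;> simp [h1, h2]
  rw [hset, convexHull_prod, convexHull_pair, convexHull_pair,
    segment_eq_Icc (by norm_num), segment_eq_Icc (by norm_num),
    MeasureTheory.Measure.volume_eq_prod ℝ ℝ, Measure.prod_prod, Real.volume_Icc,
    Real.volume_Icc, ← ENNReal.ofReal_mul (by norm_num)]
  norm_num

/-- `a4 a8 a12 a16` is the unique maximum-area quadrilateral with vertices among
the 16 points of the counterexample polygon. -/
theorem unique_max_quadrilateral :
    ∀ S ⊆ Finset.image pts Finset.univ, S.card = 4 →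
      S ≠ ({a4, a8, a12, a16} : Finset (ℝ × ℝ)) →
      hullArea S < hullArea ({a4, a8, a12, a16} : Finset (ℝ × ℝ)) := by
  intro S hS hcard hne
  obtain ⟨T, hTsub, hTS⟩ := Finset.subset_image_iff.mp hS
  subst hTS
  have hTcard : T.card = 4 := by
    rw [← Finset.card_image_of_injective T pts_inj]
    exact hcard
  have hlen : (T.sort (· ≤ ·)).length = 4 := by
    rw [Finset.length_sort]
    exact hTcard
  have hsort : List.Pairwise (· < ·) (T.sort (· ≤ ·)) := (Finset.sortedLT_sort T).pairwise
  have htf : (T.sort (· ≤ ·)).toFinset = T := Finset.sort_toFinset T _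
  obtain ⟨L, hLdef⟩ : ∃ L : List (Fin 16), T.sort (· ≤ ·) = L := ⟨_, rfl⟩
  rw [hLdef] at hlen hsort htf
  rcases L with _ | ⟨i, L⟩
  · simp only [List.length_nil] at hlen; omega
  rcases L with _ | ⟨j, L⟩
  · simp only [List.length_cons, List.length_nil] at hlen; omega
  rcases L with _ | ⟨k, L⟩
  · simp only [List.length_cons, List.length_nil] at hlen; omega
  rcases L with _ | ⟨l, L⟩
  · simp only [List.length_cons, List.length_nil] at hlen; omega
  rcases L with _ | ⟨m, L⟩
  case cons => simp only [List.length_cons] at hlen; omega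
  rw [List.pairwise_cons] at hsort
  obtain ⟨h1, hsort⟩ := hsort
  rw [List.pairwise_cons] at hsort
  obtain ⟨h2, hsort⟩ := hsort
  rw [List.pairwise_cons] at hsort
  obtain ⟨h3, -⟩ := hsort
  have hij : i < j := h1 j (by simp)
  have hjk : j < k := h2 k (by simp)
  have hkl : k < l := h3 l (by simp)
  have hT4 : T = ({i, j, k, l} : Finset (Fin 16)) := by
    rw [← htf]
    simp
  have hind : ¬(i = 3 ∧ j = 7 ∧ k = 11 ∧ l = 15) := by
    rintro ⟨rfl, rfl, rfl, rfl⟩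
    apply hne
    rw [hT4]
    rw [Finset.image_insert, Finset.image_insert, Finset.image_insert, Finset.image_singleton]
    rw [show pts 3 = a4 from rfl, show pts 7 = a8 from rfl, show pts 11 = a12 from rfl,
      show pts 15 = a16 from rfl]
  have hset : ((Finset.image pts T : Finset (ℝ × ℝ)) : Set (ℝ × ℝ)) =
      ({pts i, pts j, pts k, pts l} : Set (ℝ × ℝ)) := by
    rw [hT4]
    simp [Finset.image_insert]
  have hbound := quad_vol i j k l hij hjk hkl
  have hnum : d2 i j k + d2 i k l < 800000000 := F2 i j k l hij hjk hkl hind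
  calc hullArea (Finset.image pts T)
      = volume (convexHull ℝ ({pts i, pts j, pts k, pts l} : Set (ℝ × ℝ))) := by
        rw [hullArea, hset]
    _ ≤ ENNReal.ofReal (((d2 i j k + d2 i k l : ℤ) : ℝ) / 2) := hbound
    _ < ENNReal.ofReal 400000000 := by
        rw [ENNReal.ofReal_lt_ofReal_iff (by norm_num)]
        have : ((d2 i j k + d2 i k l : ℤ) : ℝ) < 800000000 := by exact_mod_cast hnum
        linarith
    _ = hullArea ({a4, a8, a12, a16} : Finset (ℝ × ℝ)) := by
        rw [hullArea, square_vol]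
end

section
/- The shoelace formula for a convex quadrilateral: if p, q, r, s are points in ℝ² in convex position in counterclockwise order, then the area of their convex hull equals (1/2)(x_p(y_q−y_s) + x_q(y_r−y_p) + x_r(y_s−y_q) + x_s(y_p−y_r)), and this equals area(pqr) + area(prs) where area denotes triangle area. -/
open MeasureTheory

open Set

section Aux

lemma combo3_eq (a b c : ℝ) (u v w z : ℝ×ℝ)
    (hh1 : a*u.1+b*v.1+c*w.1 = z.1) (hh2 : a*u.2+b*v.2+c*w.2 = z.2) :
    a•u+b•v+c•w = z := by
  apply Prod.ext <;> simpa [Prod.smul_fst, Prod.smul_snd] using (by assumption)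

lemma combo_mem_hull3 (p q r : ℝ×ℝ) (a b c : ℝ) (ha : 0 ≤ a) (hb : 0 ≤ b) (hc : 0 ≤ c)
    (habc : a + b + c = 1) : a • p + b • q + c • r ∈ convexHull ℝ ({p, q, r} : Set (ℝ×ℝ)) := by
  have := (convex_convexHull ℝ ({p, q, r} : Set (ℝ×ℝ))).sum_mem (t := Finset.univ)
    (w := ![a,b,c]) (z := ![p,q,r]) (by intro i _; fin_cases i <;> assumption)
    (by simp [Fin.sum_univ_three, habc])
    (by intro i _; fin_cases i <;> exact subset_convexHull ℝ _ (by simp))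
  simpa [Fin.sum_univ_three] using this

lemma hull3_sub (p q r : ℝ×ℝ) : convexHull ℝ ({p,q,r} : Set (ℝ×ℝ)) ⊆
    {x | ∃ a b c : ℝ, 0 ≤ a ∧ 0 ≤ b ∧ 0 ≤ c ∧ a+b+c=1 ∧ x = a•p+b•q+c•r} := by
  intro x hx
  rw [convexHull_insert (by simp : ({q,r} : Set (ℝ×ℝ)).Nonempty), convexHull_pair,
    mem_convexJoin] at hx
  obtain ⟨p', hp', y, ⟨u, v, hu, hv, huv, hy⟩, a, b, ha, hb, hab, hx⟩ := hx
  rw [Set.mem_singleton_iff] at hp'; subst hp'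
  exact ⟨a, b*u, b*v, ha, by positivity, by positivity, by nlinarith,
    by rw [← hx, ← hy]; module⟩

lemma hull4_sub (p q r s : ℝ×ℝ) : convexHull ℝ ({p,q,r,s} : Set (ℝ×ℝ)) ⊆
    {x | ∃ a b c d : ℝ, 0 ≤ a ∧ 0 ≤ b ∧ 0 ≤ c ∧ 0 ≤ d ∧ a+b+c+d=1 ∧ x = a•p+b•q+c•r+d•s} := by
  intro x hx
  rw [convexHull_insert (show ({q,r,s} : Set (ℝ×ℝ)).Nonempty by simp), mem_convexJoin] at hx
  obtain ⟨p', hp', y, hy, a, b, ha, hb, hab, hx⟩ := hx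
  rw [Set.mem_singleton_iff] at hp'; subst hp'
  obtain ⟨u, v, w, hu, hv, hw, huvw, hy⟩ := hull3_sub q r s hy
  exact ⟨a, b*u, b*v, b*w, ha, by positivity, by positivity, by positivity, by nlinarith,
    by rw [← hx, hy]; module⟩

def T0 : Set (ℝ×ℝ) := {z | 0 ≤ z.1 ∧ 0 ≤ z.2 ∧ z.1 + z.2 ≤ 1}

lemma T0_meas : MeasurableSet T0 := by
  apply MeasurableSet.inter
  · exact measurableSet_le measurable_const measurable_fst
  apply MeasurableSet.inter
  · exact measurableSet_le measurable_const measurable_snd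
  · exact measurableSet_le (measurable_fst.add measurable_snd) measurable_const

lemma volume_T0 : volume T0 = ENNReal.ofReal (1/2) := by
  rw [Measure.volume_eq_prod, Measure.prod_apply T0_meas]
  have hslice : ∀ x : ℝ, (Prod.mk x ⁻¹' T0) = if 0 ≤ x then Icc 0 (1-x) else ∅ := by
    intro x
    split_ifs with hx
    · ext y; simp [T0, hx, mem_Icc]; intro _; constructor <;> intro <;> linarith
    · ext y; simp [T0]; intro h; exact absurd h hx
  have h2 : ∀ x : ℝ, volume (Prod.mk x ⁻¹' T0) =
      ENNReal.ofReal (indicator (Icc (0:ℝ) 1) (fun x => 1 - x) x) := by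
    intro x
    rw [hslice x]
    by_cases hx : 0 ≤ x
    · by_cases hx1 : x ≤ 1
      · rw [if_pos hx, Real.volume_Icc, indicator_of_mem (mem_Icc.mpr ⟨hx, hx1⟩)]
        norm_num
      · rw [if_pos hx, Real.volume_Icc, indicator_of_notMem (by simp [mem_Icc]; intro; linarith)]
        rw [ENNReal.ofReal_eq_zero.mpr (by linarith), ENNReal.ofReal_zero]
    · rw [if_neg hx, indicator_of_notMem (by simp [mem_Icc]; intro; linarith)]
      simp
  simp_rw [h2]
  rw [← ofReal_integral_eq_lintegral_ofReal]
  · congr 1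
    rw [integral_indicator measurableSet_Icc]
    rw [integral_Icc_eq_integral_Ioc, ← intervalIntegral.integral_of_le (by norm_num)]
    rw [intervalIntegral.integral_sub intervalIntegrable_const
      (intervalIntegral.intervalIntegrable_id)]
    simp
    norm_num
  · exact (integrable_indicator_iff measurableSet_Icc).mpr
      ((continuous_const.sub continuous_id).integrableOn_Icc)
  · filter_upwards with x
    by_cases h : x ∈ Icc (0:ℝ) 1
    · rw [indicator_of_mem h]; simp at h ⊢; linarith [h.2]
    · rw [indicator_of_notMem h]; simp

lemma hull3_T0 : convexHull ℝ ({((0:ℝ),(0:ℝ)), (1,0), (0,1)} : Set (ℝ×ℝ)) = T0 := by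
  apply Subset.antisymm
  · intro x hx
    obtain ⟨a, b, c, ha, hb, hc, habc, hx⟩ := hull3_sub _ _ _ hx
    subst hx
    refine ⟨by simpa using hb, by simpa using hc, ?_⟩
    simp
    linarith
  · intro z hz
    obtain ⟨hz1, hz2, hz3⟩ := hz
    have := combo_mem_hull3 ((0:ℝ),(0:ℝ)) (1,0) (0,1) (1 - z.1 - z.2) z.1 z.2
      (by linarith) hz1 hz2 (by ring)
    convert this using 2
    ext <;> simp

noncomputable def Lm (u v : ℝ×ℝ) : (ℝ×ℝ) →ₗ[ℝ] (ℝ×ℝ) :=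
  Matrix.toLin (Module.Basis.finTwoProd ℝ) (Module.Basis.finTwoProd ℝ) !![u.1, v.1; u.2, v.2]

lemma Lm_det (u v : ℝ×ℝ) : LinearMap.det (Lm u v) = cross u v := by
  rw [Lm, ← LinearMap.det_toMatrix (Module.Basis.finTwoProd ℝ), LinearMap.toMatrix_toLin,
    Matrix.det_fin_two]
  simp [cross]; ring

lemma Lm_apply (u v : ℝ×ℝ) (x y : ℝ) : Lm u v (x, y) = x • u + y • v := by
  simp [Lm, Matrix.toLin_apply, Module.Basis.finTwoProd]
  ext <;> simp [Matrix.mulVec, Matrix.vecHead, Matrix.vecTail, Fin.sum_univ_two] <;> ring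

lemma volume_triangle (p q r : ℝ×ℝ) :
    volume (convexHull ℝ ({p,q,r} : Set (ℝ×ℝ))) = ENNReal.ofReal (|cross (q-p) (r-p)| / 2) := by
  have h1 : (fun a => (AffineEquiv.constVAdd ℝ (ℝ×ℝ) p) a) '' ({0, q - p, r - p} : Set (ℝ×ℝ))
      = {p, q, r} := by
    simp [Set.image_insert_eq, Set.image_singleton, AffineEquiv.constVAdd_apply]
  have h2 := (AffineEquiv.constVAdd ℝ (ℝ×ℝ) p).toAffineMap.image_convexHull
    ({0, q - p, r - p} : Set (ℝ×ℝ))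
  simp only [AffineEquiv.coe_toAffineMap] at h2
  rw [h1] at h2
  have h3 : Lm (q-p) (r-p) '' ({((0:ℝ),(0:ℝ)), (1,0), (0,1)} : Set (ℝ×ℝ)) = {0, q-p, r-p} := by
    simp [Set.image_insert_eq, Set.image_singleton, Lm_apply]
  have h4 : convexHull ℝ ({0, q-p, r-p} : Set (ℝ×ℝ))
      = Lm (q-p) (r-p) '' convexHull ℝ ({((0:ℝ),(0:ℝ)), (1,0), (0,1)} : Set (ℝ×ℝ)) := by
    rw [LinearMap.image_convexHull, h3]
  have hvadd : ((AffineEquiv.constVAdd ℝ (ℝ×ℝ) p) : ℝ×ℝ → ℝ×ℝ) = fun a : ℝ×ℝ => p + a := by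
    funext a; simp [AffineEquiv.constVAdd_apply]
  rw [← h2, hvadd, Set.image_add_left, measure_preimage_add, h4,
    Measure.addHaar_image_linearMap, Lm_det, hull3_T0, volume_T0,
    ← ENNReal.ofReal_mul (abs_nonneg _), mul_one_div]

lemma line_null (p w : ℝ×ℝ) (hw : w ≠ 0) :
    volume {z : ℝ×ℝ | cross w (z - p) = 0} = 0 := by
  set g : (ℝ×ℝ) →ₗ[ℝ] ℝ := w.1 • (LinearMap.snd ℝ ℝ ℝ) - w.2 • (LinearMap.fst ℝ ℝ ℝ) with hg
  have hK : LinearMap.ker g ≠ ⊤ := by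
    intro htop
    have hmem : ((-w.2, w.1) : ℝ×ℝ) ∈ LinearMap.ker g := htop ▸ Submodule.mem_top
    rw [LinearMap.mem_ker] at hmem
    simp [hg] at hmem
    apply hw
    have h1 : w.1 = 0 ∧ w.2 = 0 := by constructor <;> nlinarith
    exact Prod.ext h1.1 h1.2
  have hnull : volume ((LinearMap.ker g : Submodule ℝ (ℝ×ℝ)) : Set (ℝ×ℝ)) = 0 :=
    Measure.addHaar_submodule volume _ hK
  have hset : {z : ℝ×ℝ | cross w (z - p) = 0}
      = (fun z => -p + z) ⁻¹' ((LinearMap.ker g : Submodule ℝ (ℝ×ℝ)) : Set (ℝ×ℝ)) := by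
    ext z
    simp [cross, hg, LinearMap.mem_ker]
    constructor <;> intro <;> linarith
  rw [hset, measure_preimage_add]
  exact hnull

end Aux

set_option maxHeartbeats 1000000 in
/-- Shoelace formula for a convex quadrilateral given counterclockwise: the hull area
equals the shoelace expression, which equals the sum of the two triangle areas. -/
theorem shoelace_convex_quadrilateral (p q r s : ℝ × ℝ)
    (h1 : 0 < cross (q - p) (r - q)) (h2 : 0 < cross (r - q) (s - r))
    (h3 : 0 < cross (s - r) (p - s)) (h4 : 0 < cross (p - s) (q - p)) :
    (volume (convexHull ℝ ({p, q, r, s} : Set (ℝ × ℝ)))).toReal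
        = (p.1 * (q.2 - s.2) + q.1 * (r.2 - p.2) + r.1 * (s.2 - q.2) + s.1 * (p.2 - r.2)) / 2 ∧
    (p.1 * (q.2 - s.2) + q.1 * (r.2 - p.2) + r.1 * (s.2 - q.2) + s.1 * (p.2 - r.2)) / 2
        = triArea p q r + triArea p r s := by
  simp only [cross, Prod.fst_sub, Prod.snd_sub] at h1 h2 h3 h4
  -- coordinate abbreviations
  set D := (q.1-p.1)*(r.2-p.2)-(q.2-p.2)*(r.1-p.1) with hDdef
  set D2 := (r.1-p.1)*(s.2-p.2)-(r.2-p.2)*(s.1-p.1) with hD2def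
  set E := (q.1-p.1)*(s.2-p.2)-(q.2-p.2)*(s.1-p.1) with hEdef
  have hD : 0 < D := by rw [hDdef]; nlinarith [h1]
  have hD2 : 0 < D2 := by rw [hD2def]; nlinarith [h3]
  have hE : 0 < E := by rw [hEdef]; nlinarith [h4]
  have hD0 : D ≠ 0 := ne_of_gt hD
  have hD20 : D2 ≠ 0 := ne_of_gt hD2
  have hN : 0 < D + D2 - E := by
    have hH : 0 < (r.1-q.1)*(p.2-q.2)-(r.2-q.2)*(p.1-q.1) := by nlinarith [h1]
    have hF : 0 < (r.1-q.1)*(s.2-q.2)-(r.2-q.2)*(s.1-q.1) := by nlinarith [h2]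
    have key : (D + D2 - E) * ((r.1-q.1)*(p.2-q.2)-(r.2-q.2)*(p.1-q.1))
        = ((r.1-q.1)*(s.2-q.2)-(r.2-q.2)*(s.1-q.1)) * D := by
      rw [hDdef, hD2def, hEdef]; ring
    nlinarith [mul_pos hF hD, hH, key]
  set T1 := convexHull ℝ ({p,q,r} : Set (ℝ×ℝ)) with hT1def
  set T2 := convexHull ℝ ({p,r,s} : Set (ℝ×ℝ)) with hT2def
  -- the union decomposition
  have hcup : convexHull ℝ ({p,q,r,s} : Set (ℝ×ℝ)) = T1 ∪ T2 := by
    apply Subset.antisymm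
    · intro x hx
      obtain ⟨a,b,c,d,ha,hb,hc,hd,habcd,hx⟩ := hull4_sub p q r s hx
      rcases le_total (d*D2) (b*D) with hcase | hcase
      · left
        have hxx : (a + d*((D+D2-E)/D)) • p + (b - d*(D2/D)) • q + (c + d*(E/D)) • r = x := by
          apply combo3_eq <;>
          · rw [hx]
            simp only [Prod.fst_add, Prod.snd_add, Prod.smul_fst, Prod.smul_snd, smul_eq_mul,
              hDdef, hD2def, hEdef]
            have hD0' := hD0; have hD20' := hD20; rw [hDdef] at hD0'; rw [hD2def] at hD20'
            field_simp
            ring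
        rw [hT1def, ← hxx]
        apply combo_mem_hull3
        · exact add_nonneg ha (mul_nonneg hd (div_nonneg hN.le hD.le))
        · have heq : b - d*(D2/D) = (b*D - d*D2)/D := by field_simp; try ring
          rw [heq]; exact div_nonneg (by linarith) hD.le
        · exact add_nonneg hc (mul_nonneg hd (div_nonneg hE.le hD.le))
        · field_simp
          linear_combination D * habcd
      · right
        have hxx : (a + b*((D2+D-E)/D2)) • p + (c + b*(E/D2)) • r + (d - b*(D/D2)) • s = x := by
          apply combo3_eq <;>
          · rw [hx]
            simp only [Prod.fst_add, Prod.snd_add, Prod.smul_fst, Prod.smul_snd, smul_eq_mul,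
              hDdef, hD2def, hEdef]
            have hD0' := hD0; have hD20' := hD20; rw [hDdef] at hD0'; rw [hD2def] at hD20'
            field_simp
            ring
        rw [hT2def, ← hxx]
        apply combo_mem_hull3
        · exact add_nonneg ha (mul_nonneg hb (div_nonneg (by linarith) hD2.le))
        · exact add_nonneg hc (mul_nonneg hb (div_nonneg hE.le hD2.le))
        · have heq : d - b*(D/D2) = (d*D2 - b*D)/D2 := by field_simp; try ring
          rw [heq]; exact div_nonneg (by linarith) hD2.le
        · field_simp
          linear_combination D2 * habcd
    · apply Set.union_subset <;> apply convexHull_mono <;> intro z hz <;> simp at hz ⊢ <;> tauto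
  -- sign of the diagonal functional on each triangle
  have hT1sign : ∀ z ∈ T1, cross (r - p) (z - p) ≤ 0 := by
    intro z hz
    obtain ⟨A,B,C,hA,hB,hC,hsum,hzeq⟩ := hull3_sub p q r hz
    have hAeq : A = 1 - B - C := by linarith
    subst hAeq
    rw [hzeq]
    simp only [cross, Prod.fst_sub, Prod.snd_sub, Prod.fst_add, Prod.snd_add, Prod.smul_fst,
      Prod.smul_snd, smul_eq_mul]
    nlinarith [mul_nonneg hB hD.le]
  have hT2sign : ∀ z ∈ T2, 0 ≤ cross (r - p) (z - p) := by
    intro z hz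
    obtain ⟨A,B,C,hA,hB,hC,hsum,hzeq⟩ := hull3_sub p r s hz
    have hAeq : A = 1 - B - C := by linarith
    subst hAeq
    rw [hzeq]
    simp only [cross, Prod.fst_sub, Prod.snd_sub, Prod.fst_add, Prod.snd_add, Prod.smul_fst,
      Prod.smul_snd, smul_eq_mul]
    nlinarith [mul_nonneg hC hD2.le]
  have hrp : r - p ≠ 0 := by
    intro h
    have hc1 : r.1 - p.1 = 0 := by rw [← Prod.fst_sub, h]; rfl
    have hc2 : r.2 - p.2 = 0 := by rw [← Prod.snd_sub, h]; rfl
    rw [hDdef, hc1, hc2] at hD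
    simp at hD
  have hinter : volume (T1 ∩ T2) = 0 := by
    exact measure_mono_null (fun z hz => le_antisymm (hT1sign z hz.1) (hT2sign z hz.2))
      (line_null p (r - p) hrp)
  have hT2meas : MeasurableSet T2 := by
    rw [hT2def]
    exact ((Set.Finite.isCompact_convexHull ℝ (Set.toFinite _)).isClosed).measurableSet
  have hvol : volume (convexHull ℝ ({p, q, r, s} : Set (ℝ × ℝ))) = ENNReal.ofReal (D/2 + D2/2) := by
    rw [hcup]
    have := measure_union_add_inter (μ := volume) T1 hT2meas
    rw [hinter, add_zero] at this
    rw [this, hT1def, hT2def, volume_triangle, volume_triangle]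
    have c1 : cross (q - p) (r - p) = D := by
      simp [cross, Prod.fst_sub, Prod.snd_sub, hDdef]
    have c2 : cross (r - p) (s - p) = D2 := by
      simp [cross, Prod.fst_sub, Prod.snd_sub, hD2def]
    rw [c1, c2, abs_of_pos hD, abs_of_pos hD2, ← ENNReal.ofReal_add (by positivity) (by positivity)]
  constructor
  · rw [hvol, ENNReal.toReal_ofReal (by positivity)]
    rw [hDdef, hD2def]
    ring
  · rw [triArea, triArea]
    have a1 : |(q.1 - p.1) * (r.2 - p.2) - (q.2 - p.2) * (r.1 - p.1)| = D := by
      rw [← hDdef]; exact abs_of_pos hD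
    have a2 : |(r.1 - p.1) * (s.2 - p.2) - (r.2 - p.2) * (s.1 - p.1)| = D2 := by
      rw [← hD2def]; exact abs_of_pos hD2
    rw [a1, a2, hDdef, hD2def]
    ring
end
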